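/- Let x = u a ā v b w and y = u ā v b b̄ w (with u, v, w ∈ {0,1}*, a, b ∈ {0,1}) be Type-B confusable binary sequences of length n. Then x and y are Type-A confusable if and only if one of the following holds: (i) a = b and v = (a ā)^m for some m ≥ 0; (ii) a = b̄ and v = (a ā)^m a for some m ≥ 0. -/

import Mathlib

open List

/-- The `t`-insertion ball of a binary word `x`: all words of length `|x| + t`
containing `x` as a (not necessarily contiguous) subsequence. -/
def insBall (t : ℕ) (x : List Bool) : Set (List Bool) :=
  {z | z.length = x.length + t ∧ x.Sublist z}

/-- Componentwise complement of a binary word. -/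
def bcompl (w : List Bool) : List Bool := w.map (fun c => !c)

/-- `wpow p i` is the concatenation of `i` copies of the word `p`. -/
def wpow (p : List Bool) (i : ℕ) : List Bool := (List.replicate i p).flatten

/-- `w` is an alternating word of length at least 1:
`w = (a ā)^i` with `i ≥ 1`, or `w = (a ā)^j a` with `j ≥ 0`. -/
def IsAlt (w : List Bool) : Prop :=
  ∃ a : Bool, (∃ i, 1 ≤ i ∧ w = wpow [a, !a] i) ∨ (∃ j, w = wpow [a, !a] j ++ [a])

/-- Type-A confusability: `x = u w v`, `y = u w̄ v` for an alternating block `w`. -/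
def TypeA (x y : List Bool) : Prop :=
  ∃ u v w : List Bool, IsAlt w ∧ x = u ++ w ++ v ∧ y = u ++ bcompl w ++ v

/-- Type-B confusability: `{x, y} = {u a ā v b w, u ā v b b̄ w}`. -/
def TypeB (x y : List Bool) : Prop :=
  ∃ (u v w : List Bool) (a b : Bool),
    ({x, y} : Set (List Bool)) =
      {u ++ [a, !a] ++ v ++ [b] ++ w, u ++ [!a] ++ v ++ [b, !b] ++ w}

/-- `p` is a period of `s` : `s_i = s_{i+p}` whenever both indices are in range. -/
def IsPeriodOf (p : ℕ) (s : List Bool) : Prop :=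
  ∀ i, i + p < s.length → s.getD i false = s.getD (i + p) false

/-- The (smallest) period of `s` is at most `ℓ`. -/
def PeriodLe (s : List Bool) (ℓ : ℕ) : Prop :=
  ∃ p, 1 ≤ p ∧ p ≤ ℓ ∧ IsPeriodOf p s

/-- `R(n, ℓ, t)`: binary words of length `n` in which every contiguous subword
of period at most `ℓ` has length at most `t`. -/
def Rset (n ℓ t : ℕ) : Set (List Bool) :=
  {x | x.length = n ∧ ∀ s : List Bool, s <:+: x → PeriodLe s ℓ → s.length ≤ t}

/-- `Inv(x)`: the number of pairs `i < j` with `x_i > x_j` (i.e. `x_i = 1`, `x_j = 0`). -/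
def invNum (x : List Bool) : ℕ :=
  ((Finset.range x.length ×ˢ Finset.range x.length).filter
    (fun q => q.1 < q.2 ∧ x.getD q.1 false = true ∧ x.getD q.2 false = false)).card

section Stmt2Aux

lemma wpow_succ (p : List Bool) (m : ℕ) : wpow p (m+1) = p ++ wpow p m := by
  simp [wpow, List.replicate_succ]

lemma wpow_succ' (p : List Bool) (m : ℕ) : wpow p (m+1) = wpow p m ++ p := by
  simp [wpow, List.replicate_succ', List.flatten_append]

lemma wpow_cons (a : Bool) (m : ℕ) : a :: wpow [!a, a] m = wpow [a, !a] m ++ [a] := by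
  induction m with
  | zero => simp [wpow]
  | succ m ih =>
    rw [wpow_succ, wpow_succ]
    simp only [List.cons_append, List.append_assoc, List.nil_append]
    rw [← ih]

lemma bcompl_append (l1 l2 : List Bool) : bcompl (l1 ++ l2) = bcompl l1 ++ bcompl l2 := by
  simp [bcompl]

lemma bcompl_wpow (a : Bool) (m : ℕ) : bcompl (wpow [a, !a] m) = wpow [!a, a] m := by
  induction m with
  | zero => simp [wpow, bcompl]
  | succ m ih =>
    rw [wpow_succ, bcompl_append, ih, wpow_succ]
    simp [bcompl]

lemma key1' (a : Bool) (m : ℕ) :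
    wpow [!a, a] (m+1) ++ [!a] = [!a] ++ wpow [a, !a] m ++ [a, !a] := by
  induction m with
  | zero => simp [wpow]
  | succ m ih =>
    rw [wpow_succ (m := m + 1)]
    simp only [List.append_assoc] at ih ⊢
    rw [ih, wpow_succ]
    simp

lemma key1 (a : Bool) (m : ℕ) :
    bcompl (wpow [a, !a] (m+1) ++ [a]) = [!a] ++ wpow [a, !a] m ++ [a, !a] := by
  rw [bcompl_append, bcompl_wpow, ← key1']
  simp [bcompl]

lemma key2 (a : Bool) (m : ℕ) :
    wpow [!a, a] (m+2) = [!a] ++ (wpow [a, !a] m ++ [a]) ++ [!a, a] := by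
  induction m with
  | zero => simp [wpow]
  | succ m ih =>
    rw [show m + 1 + 2 = (m + 2) + 1 from rfl, wpow_succ, ih, wpow_succ]
    simp

lemma key3 (a : Bool) (m : ℕ) :
    wpow [a, !a] (m+2) = [a, !a] ++ wpow [a, !a] m ++ [a, !a] := by
  rw [show m + 2 = (m+1)+1 from rfl, wpow_succ', wpow_succ]

def altb (a : Bool) (j : ℕ) : Bool := if j % 2 = 0 then a else !a

lemma altb_zero (a : Bool) : altb a 0 = a := rfl

lemma altb_succ (a : Bool) (j : ℕ) : altb a (j+1) = !(altb a j) := by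
  rcases Nat.mod_two_eq_zero_or_one j with h | h
  · have h1 : (j+1) % 2 = 1 := by omega
    simp [altb, h, h1]
  · have h1 : (j+1) % 2 = 0 := by omega
    simp [altb, h, h1]

lemma altb_two (a : Bool) (j : ℕ) : altb a (j+2) = altb a j := by
  rw [show j + 2 = (j+1)+1 from rfl, altb_succ, altb_succ, Bool.not_not]

lemma altb_not (a : Bool) (j : ℕ) : altb (!a) j = !(altb a j) := by
  unfold altb; split <;> simp

lemma eq_alt : ∀ (n : ℕ) (v : List Bool) (a : Bool), v.length ≤ n →
    (∀ i < v.length, v[i]? = some (altb a i)) →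
    (∃ m, v.length = 2*m ∧ v = wpow [a, !a] m) ∨
    (∃ m, v.length = 2*m+1 ∧ v = wpow [a, !a] m ++ [a]) := by
  intro n
  induction n with
  | zero =>
    intro v a hl _
    left
    exact ⟨0, by omega, by simp [wpow]; exact List.eq_nil_of_length_eq_zero (by omega)⟩
  | succ n ih =>
    intro v a hl hv
    match v with
    | [] => exact Or.inl ⟨0, by simp, by simp [wpow]⟩
    | c :: v' =>
      have hc : c = a := by
        have := hv 0 (by simp)
        simpa [altb] using this
      subst hc
      have hv' : ∀ i < v'.length, v'[i]? = some (altb (!c) i) := by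
        intro i hi
        have := hv (i+1) (by simp; omega)
        rw [List.getElem?_cons_succ] at this
        rw [this, altb_succ, altb_not]
      have hl' : v'.length ≤ n := by simp at hl; omega
      rcases ih v' (!c) hl' hv' with ⟨m, hm, hveq⟩ | ⟨m, hm, hveq⟩
      · right
        refine ⟨m, by simp [hm], ?_⟩
        rw [← wpow_cons]
        rw [hveq]
        simp
      · left
        refine ⟨m+1, by simp [hm]; omega, ?_⟩
        rw [wpow_succ', hveq]
        simp only [Bool.not_not]
        rw [show c :: (wpow [!c, c] m ++ [!c]) = (c :: wpow [!c, c] m) ++ [!c] from rfl,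
          wpow_cons]
        simp

lemma get_pre (A P B : List Bool) (j : ℕ) (h : j < P.length) :
    (A ++ (P ++ B))[A.length + j]? = P[j]? := by
  rw [List.getElem?_append_right (Nat.le_add_right _ _)]
  simp only [Nat.add_sub_cancel_left]
  rw [List.getElem?_append, if_pos h]

lemma get_pre' (A P B : List Bool) (i j : ℕ) (h : j < P.length) (hi : i = A.length + j) :
    (A ++ (P ++ B))[i]? = P[j]? := by
  subst hi; exact get_pre A P B j h

end Stmt2Aux

theorem stmt2 (u v w : List Bool) (a b : Bool) (x y : List Bool)
    (hx : x = u ++ [a, !a] ++ v ++ [b] ++ w)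
    (hy : y = u ++ [!a] ++ v ++ [b, !b] ++ w) :
    TypeA x y ↔
      ((a = b ∧ ∃ m, v = wpow [a, !a] m) ∨
       (a = !b ∧ ∃ m, v = wpow [a, !a] m ++ [a])) := by
  constructor
  · rintro ⟨U, V, W, hAlt, hx', hy'⟩
    have hlenb : (bcompl W).length = W.length := by simp [bcompl]
    have hx2 : x = U ++ (W ++ V) := by rw [hx', List.append_assoc]
    have hy2 : y = U ++ (bcompl W ++ V) := by rw [hy', List.append_assoc]
    have hmid : ∀ i c, U.length ≤ i → i < U.length + W.length →
        x[i]? = some c → y[i]? = some (!c) := by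
      intro i c h1 h2 hc
      rw [hx2, List.getElem?_append_right h1,
        List.getElem?_append, if_pos (by omega)] at hc
      rw [hy2, List.getElem?_append_right h1,
        List.getElem?_append, if_pos (by rw [hlenb]; omega)]
      simp only [bcompl, List.getElem?_map, hc, Option.map_some]
    have heq : ∀ i, i < U.length ∨ U.length + W.length ≤ i → y[i]? = x[i]? := by
      intro i h
      rcases h with h | h
      · have e1 : (U ++ (W ++ V))[i]? = U[i]? := by
          rw [List.getElem?_append, if_pos h]
        have e2 : (U ++ (bcompl W ++ V))[i]? = U[i]? := by
          rw [List.getElem?_append, if_pos h]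
        rw [hx2, hy2, e1, e2]
      · rw [hx2, List.getElem?_append_right (by omega),
          List.getElem?_append_right (by omega : W.length ≤ i - U.length),
          hy2, List.getElem?_append_right (by omega),
          List.getElem?_append_right (by rw [hlenb]; omega), hlenb]
    have hx1 : x = u ++ ([a, !a] ++ (v ++ ([b] ++ w))) := by simp [hx]
    have hy1 : y = u ++ ([!a] ++ (v ++ ([b, !b] ++ w))) := by simp [hy]
    have hxa : x[u.length + 0]? = some a := by
      rw [hx1, get_pre' u [a, !a] _ _ 0 (by simp) rfl]
      rfl
    have hya : y[u.length + 0]? = some (!a) := by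
      rw [hy1, get_pre' u [!a] _ _ 0 (by simp) rfl]
      rfl
    have hx6 : x = (u ++ [a, !a] ++ v) ++ ([b] ++ w) := by simp [hx]
    have hxb : x[u.length + (v.length + 2)]? = some b := by
      rw [hx6, get_pre' _ [b] _ _ 0 (by simp)
        (by simp only [List.length_append, List.length_cons, List.length_nil]; omega)]
      rfl
    have hy7 : y = (u ++ [!a] ++ v) ++ ([b, !b] ++ w) := by simp [hy]
    have hyb : y[u.length + (v.length + 2)]? = some (!b) := by
      rw [hy7, get_pre' _ [b, !b] _ _ 1 (by simp)
        (by simp only [List.length_append, List.length_cons, List.length_nil]; omega)]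
      rfl
    have hy5 : y = u ++ (([!a] ++ v ++ [b]) ++ ([!b] ++ w)) := by simp [hy]
    have hx5 : x = (u ++ [a]) ++ (([!a] ++ v ++ [b]) ++ w) := by simp [hx]
    have hshift : ∀ j, j < v.length + 2 → y[u.length + j]? = x[u.length + (j+1)]? := by
      intro j hj
      rw [hy5, get_pre' _ _ _ _ j (by simp; omega) rfl,
        hx5, get_pre' _ _ _ _ j (by simp; omega)
          (by simp only [List.length_append, List.length_cons, List.length_nil]; omega)]
    have hx8 : x = (u ++ [a, !a]) ++ (v ++ ([b] ++ w)) := by simp [hx]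
    have hxv : ∀ i, i < v.length → x[u.length + (i + 2)]? = v[i]? := by
      intro i hi
      rw [hx8, get_pre' _ v _ _ i hi
        (by simp only [List.length_append, List.length_cons, List.length_nil]; omega)]
    have hm : U.length ≤ u.length ∧ u.length < U.length + W.length := by
      by_contra hcon
      have h' : y[u.length + 0]? = x[u.length + 0]? := heq _ (by omega)
      rw [hxa, hya] at h'
      simp at h'
    have hbm : U.length ≤ u.length + (v.length + 2) ∧
        u.length + (v.length + 2) < U.length + W.length := by
      by_contra hcon
      have h' : y[u.length + (v.length + 2)]? = x[u.length + (v.length + 2)]? :=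
        heq _ (by omega)
      rw [hxb, hyb] at h'
      simp at h'
    have halt : ∀ j, j ≤ v.length + 2 → x[u.length + j]? = some (altb a j) := by
      intro j
      induction j with
      | zero => intro _; rw [altb_zero, hxa]
      | succ j ih =>
        intro hj
        have h1 : y[u.length + j]? = x[u.length + (j+1)]? := hshift j (by omega)
        have h2 := hmid (u.length + j) (altb a j) (by omega) (by omega) (ih (by omega))
        rw [← h1, h2, altb_succ]
    have hvv : ∀ i, i < v.length → v[i]? = some (altb a i) := by
      intro i hi
      rw [← hxv i hi, halt (i+2) (by omega), altb_two]
    have hbval : b = altb a v.length := by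
      have h1 := halt (v.length + 2) le_rfl
      rw [hxb, altb_two] at h1
      exact Option.some.inj h1
    rcases eq_alt v.length v a le_rfl hvv with ⟨m, hml, hveq⟩ | ⟨m, hml, hveq⟩
    · left
      have hpar : v.length % 2 = 0 := by omega
      exact ⟨by rw [hbval]; simp [altb, hpar], m, hveq⟩
    · right
      have hpar : v.length % 2 = 1 := by omega
      refine ⟨?_, m, hveq⟩
      rw [hbval]
      simp [altb, hpar]
  · rintro (⟨hab, m, hveq⟩ | ⟨hab, m, hveq⟩)
    · subst hab
      subst hveq
      refine ⟨u, w, wpow [a, !a] (m+1) ++ [a], ⟨a, Or.inr ⟨m+1, rfl⟩⟩, ?_, ?_⟩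
      · rw [hx, wpow_succ]; simp
      · rw [hy, key1]; simp
    · have hb : b = !a := by rw [hab, Bool.not_not]
      subst hb
      subst hveq
      refine ⟨u, w, wpow [a, !a] (m+2), ⟨a, Or.inl ⟨m+2, by omega, rfl⟩⟩, ?_, ?_⟩
      · rw [hx, key3]; simp
      · rw [hy, bcompl_wpow, key2]; simp
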